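/- Let g be a finite-dimensional real Lie algebra with basis {x_a}_{a=1..D} whose structure constants f, defined by [x_a, x_b] = Σ_c f_{abc} x_c, are totally antisymmetric in all three indices. Let t¹,…,t^D be real skew-symmetric n×n matrices forming a representation of g, i.e., [t^a, t^b] = Σ_c f_{abc} t^c, and suppose they satisfy the Bianchi identity Σ_a ( t^a_{ij} t^a_{kl} + t^a_{ik} t^a_{lj} + t^a_{il} t^a_{jk} ) = 0 for all i,j,k,l. Then the bracket on ĝ := g ⊕ ℝⁿ defined bilinearly by [(x,0),(y,0)] := ([x,y],0), [(x_a,0),(0,u)] := (0, t^a u), [(0,u),(x_a,0)] := (0, −t^a u), and [(0,u),(0,v)] := (Σ_a (uᵀ t^a v)·x_a, 0) is antisymmetric and satisfies the Jacobi identity, so it makes ĝ a Lie algebra containing g with [p,p] ⊆ g where p = ℝⁿ. -/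

import Mathlib

open Matrix

private lemma rot3 {n : ℕ} (F : Fin n → Fin n → Fin n → ℝ) :
    (∑ j, ∑ k, ∑ l, F j k l) = ∑ k, ∑ l, ∑ j, F j k l := by
  rw [Finset.sum_comm]
  exact Finset.sum_congr rfl fun k _ => Finset.sum_comm

private lemma swap4 {D n : ℕ} (F : Fin D → Fin n → Fin n → Fin n → ℝ) :
    (∑ a, ∑ j, ∑ k, ∑ l, F a j k l) = ∑ j, ∑ k, ∑ l, ∑ a, F a j k l := by
  rw [Finset.sum_comm]
  refine Finset.sum_congr rfl fun j _ => ?_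
  rw [Finset.sum_comm]
  exact Finset.sum_congr rfl fun k _ => Finset.sum_comm

private lemma sum_smul_mulVec {D n : ℕ} (c : Fin D → ℝ)
    (M : Fin D → Matrix (Fin n) (Fin n) ℝ) (q : Fin n → ℝ) :
    (∑ a, c a • M a).mulVec q = ∑ a, c a • (M a).mulVec q := by
  funext i
  simp only [mulVec, dotProduct, Matrix.sum_apply, Matrix.smul_apply, smul_eq_mul,
    Finset.sum_apply, Pi.smul_apply, Finset.sum_mul, Finset.mul_sum]
  rw [Finset.sum_comm]
  exact Finset.sum_congr rfl fun c _ => Finset.sum_congr rfl fun j _ => by ring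

private lemma mulVec_sum_smul {D n : ℕ} (A : Matrix (Fin n) (Fin n) ℝ)
    (d : Fin D → ℝ) (P : Fin D → Fin n → ℝ) :
    A.mulVec (∑ c, d c • P c) = ∑ c, d c • A.mulVec (P c) := by
  funext i
  simp only [mulVec, dotProduct, Finset.sum_apply, Pi.smul_apply, smul_eq_mul,
    Finset.mul_sum]
  rw [Finset.sum_comm]
  exact Finset.sum_congr rfl fun c _ => Finset.sum_congr rfl fun j _ => by ring

private lemma sum_dot {D n : ℕ} (F : Fin D → Fin n → ℝ) (q : Fin n → ℝ) :
    (∑ c, F c) ⬝ᵥ q = ∑ c, F c ⬝ᵥ q := by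
  simp only [dotProduct, Finset.sum_apply, Finset.sum_mul]
  exact Finset.sum_comm

private lemma dot_sum {D n : ℕ} (F : Fin D → Fin n → ℝ) (q : Fin n → ℝ) :
    q ⬝ᵥ (∑ c, F c) = ∑ c, q ⬝ᵥ F c := by
  simp only [dotProduct, Finset.sum_apply, Finset.mul_sum]
  exact Finset.sum_comm

private lemma bianchiVec {D n : ℕ} (t : Fin D → Matrix (Fin n) (Fin n) ℝ)
    (hbianchi : ∀ i j k l, ∑ a,
        (t a i j * t a k l + t a i k * t a l j + t a i l * t a j k) = 0)
    (u v w : Fin n → ℝ) :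
    ∑ a, ((v ⬝ᵥ (t a).mulVec w) • (t a).mulVec u
        + (w ⬝ᵥ (t a).mulVec u) • (t a).mulVec v
        + (u ⬝ᵥ (t a).mulVec v) • (t a).mulVec w) = 0 := by
  funext i
  have h1 : ∀ a : Fin D, (v ⬝ᵥ (t a).mulVec w) * ((t a).mulVec u i)
      = ∑ j, ∑ k, ∑ l, u j * v k * w l * (t a i j * t a k l) := by
    intro a
    simp only [mulVec, dotProduct, Finset.sum_mul, Finset.mul_sum]
    exact Finset.sum_congr rfl fun j _ => Finset.sum_congr rfl fun k _ =>
      Finset.sum_congr rfl fun l _ => by ring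
  have h2 : ∀ a : Fin D, (w ⬝ᵥ (t a).mulVec u) * ((t a).mulVec v i)
      = ∑ j, ∑ k, ∑ l, u j * v k * w l * (t a i k * t a l j) := by
    intro a
    rw [rot3 (fun j k l => u j * v k * w l * (t a i k * t a l j))]
    simp only [mulVec, dotProduct, Finset.sum_mul, Finset.mul_sum]
    exact Finset.sum_congr rfl fun j _ => Finset.sum_congr rfl fun k _ =>
      Finset.sum_congr rfl fun l _ => by ring
  have h3 : ∀ a : Fin D, (u ⬝ᵥ (t a).mulVec v) * ((t a).mulVec w i)
      = ∑ j, ∑ k, ∑ l, u j * v k * w l * (t a i l * t a j k) := by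
    intro a
    rw [rot3 (fun j k l => u j * v k * w l * (t a i l * t a j k)),
        rot3 (fun k l j => u j * v k * w l * (t a i l * t a j k))]
    simp only [mulVec, dotProduct, Finset.sum_mul, Finset.mul_sum]
    exact Finset.sum_congr rfl fun j _ => Finset.sum_congr rfl fun k _ =>
      Finset.sum_congr rfl fun l _ => by ring
  have key : (∑ a, ((v ⬝ᵥ (t a).mulVec w) • (t a).mulVec u
        + (w ⬝ᵥ (t a).mulVec u) • (t a).mulVec v
        + (u ⬝ᵥ (t a).mulVec v) • (t a).mulVec w)) i
      = ∑ a, ∑ j, ∑ k, ∑ l, u j * v k * w l *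
          (t a i j * t a k l + t a i k * t a l j + t a i l * t a j k) := by
    simp only [Finset.sum_apply, Pi.add_apply, Pi.smul_apply, smul_eq_mul]
    refine Finset.sum_congr rfl fun a _ => ?_
    rw [h1 a, h2 a, h3 a]
    simp only [← Finset.sum_add_distrib]
    exact Finset.sum_congr rfl fun j _ => Finset.sum_congr rfl fun k _ =>
      Finset.sum_congr rfl fun l _ => by ring
  rw [key, swap4]
  simp only [← Finset.mul_sum, hbianchi, mul_zero, Finset.sum_const_zero, Pi.zero_apply]

theorem bianchi_identity_gives_symmetric_pair
    (g : Type*) [LieRing g] [LieAlgebra ℝ g]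
    (D n : ℕ) (b : Module.Basis (Fin D) ℝ g)
    (f : Fin D → Fin D → Fin D → ℝ)
    (hf1 : ∀ a c e, f a c e = -f c a e)
    (hf2 : ∀ a c e, f a c e = -f a e c)
    (hstruct : ∀ a c, ⁅b a, b c⁆ = ∑ e, f a c e • b e)
    (t : Fin D → Matrix (Fin n) (Fin n) ℝ)
    (hskew : ∀ a, (t a)ᵀ = -t a)
    (hrep : ∀ a c, t a * t c - t c * t a = ∑ e, f a c e • t e)
    (hbianchi : ∀ i j k l, ∑ a,
        (t a i j * t a k l + t a i k * t a l j + t a i l * t a j k) = 0) :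
    let br : (g × (Fin n → ℝ)) → (g × (Fin n → ℝ)) → (g × (Fin n → ℝ)) :=
      fun P Q =>
        (⁅P.1, Q.1⁆ + ∑ a, (P.2 ⬝ᵥ (t a).mulVec Q.2) • b a,
          (∑ a, b.repr P.1 a • t a).mulVec Q.2 - (∑ a, b.repr Q.1 a • t a).mulVec P.2)
    (∀ P Q, br P Q = -br Q P) ∧
    (∀ P Q R, br P (br Q R) + br Q (br R P) + br R (br P Q) = 0) ∧
    (∀ y z : g, br (y, 0) (z, 0) = (⁅y, z⁆, 0)) ∧
    (∀ u v : Fin n → ℝ, (br (0, u) (0, v)).2 = 0) := by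
  intro br
  -- the linear map sending x to its representing matrix
  set T : g →ₗ[ℝ] Matrix (Fin n) (Fin n) ℝ := b.constr ℝ t with hTdef
  have hT : ∀ x : g, (∑ a, b.repr x a • t a) = T x := by
    intro x
    rw [hTdef, Module.Basis.constr_apply_fintype]
    simp [Module.Basis.equivFun_apply]
  have hTb : ∀ a, T (b a) = t a := fun a => b.constr_basis ℝ t a
  -- skew-symmetry of the dot products
  have hsd : ∀ a (p q : Fin n → ℝ), ((t a).mulVec p) ⬝ᵥ q = -(p ⬝ᵥ (t a).mulVec q) := by
    intro a p q
    rw [← Matrix.vecMul_transpose, hskew a, Matrix.vecMul_neg, neg_dotProduct,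
      ← Matrix.dotProduct_mulVec]
  -- the moment map
  set μ : (Fin n → ℝ) → (Fin n → ℝ) → g :=
    fun p q => ∑ a, (p ⬝ᵥ (t a).mulVec q) • b a with hμdef
  have hμskew : ∀ p q, μ p q = -μ q p := by
    intro p q
    rw [hμdef, ← Finset.sum_neg_distrib]
    refine Finset.sum_congr rfl fun a _ => ?_
    rw [← neg_smul]
    congr 1
    rw [dotProduct_comm, hsd]
  have hμsub2 : ∀ p q q', μ p (q - q') = μ p q - μ p q' := by
    intro p q q'
    rw [hμdef, ← Finset.sum_sub_distrib]
    refine Finset.sum_congr rfl fun a _ => ?_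
    rw [Matrix.mulVec_sub, dotProduct_sub, sub_smul]
  have hμsum1 : ∀ (d : Fin D → ℝ) (P : Fin D → (Fin n → ℝ)) q,
      μ (∑ c, d c • P c) q = ∑ c, d c • μ (P c) q := by
    intro d P q
    rw [hμdef]
    simp only [Finset.smul_sum]
    rw [Finset.sum_comm]
    refine Finset.sum_congr rfl fun a _ => ?_
    rw [sum_dot, Finset.sum_smul]
    refine Finset.sum_congr rfl fun c _ => ?_
    rw [smul_dotProduct, smul_assoc]
  have hμsum2 : ∀ (d : Fin D → ℝ) (P : Fin D → (Fin n → ℝ)) q,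
      μ q (∑ c, d c • P c) = ∑ c, d c • μ q (P c) := by
    intro d P q
    rw [hμdef]
    simp only [Finset.smul_sum]
    rw [Finset.sum_comm]
    refine Finset.sum_congr rfl fun a _ => ?_
    rw [mulVec_sum_smul, dot_sum, Finset.sum_smul]
    exact Finset.sum_congr rfl fun c _ => by rw [dotProduct_smul, smul_assoc]
  have hlie_sum : ∀ (x : g) (F : Fin D → g), ⁅x, ∑ a, F a⁆ = ∑ a, ⁅x, F a⁆ := by
    intro x F
    have h := map_sum (LieAlgebra.ad ℝ g x) F Finset.univ
    simpa only [LieAlgebra.ad_apply] using h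
  have hsum_lie : ∀ (x : g) (F : Fin D → g), ⁅∑ a, F a, x⁆ = ∑ a, ⁅F a, x⁆ := by
    intro x F
    rw [← neg_neg ⁅∑ a, F a, x⁆, lie_skew, hlie_sum, ← Finset.sum_neg_distrib]
    exact Finset.sum_congr rfl fun a _ => lie_skew _ _
  have hcomm : ∀ c e, (∑ a, f c a e • t a) = t e * t c - t c * t e := by
    intro c e
    calc (∑ a, f c a e • t a) = -∑ a, f c e a • t a := by
          rw [← Finset.sum_neg_distrib]
          exact Finset.sum_congr rfl fun a _ => by rw [hf2 c a e, neg_smul]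
      _ = -(t c * t e - t e * t c) := by rw [← hrep]
      _ = t e * t c - t c * t e := neg_sub _ _
  have hequiv_b : ∀ c p q, ⁅b c, μ p q⁆ = μ ((t c).mulVec p) q + μ p ((t c).mulVec q) := by
    intro c p q
    have hscalar : ∀ e, ∑ a, f c a e * (p ⬝ᵥ (t a).mulVec q)
        = (((t c).mulVec p) ⬝ᵥ (t e).mulVec q) + (p ⬝ᵥ (t e).mulVec ((t c).mulVec q)) := by
      intro e
      have h1 : ∑ a, f c a e * (p ⬝ᵥ (t a).mulVec q)
          = p ⬝ᵥ ((∑ a, f c a e • t a).mulVec q) := by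
        rw [sum_smul_mulVec, dot_sum]
        exact Finset.sum_congr rfl fun a _ => by rw [dotProduct_smul, smul_eq_mul]
      rw [h1, hcomm c e, Matrix.sub_mulVec, dotProduct_sub, ← Matrix.mulVec_mulVec,
        ← Matrix.mulVec_mulVec, hsd c p ((t e).mulVec q)]
      ring
    simp only [hμdef]
    rw [hlie_sum]
    simp only [lie_smul, hstruct, Finset.smul_sum]
    rw [Finset.sum_comm, ← Finset.sum_add_distrib]
    refine Finset.sum_congr rfl fun e _ => ?_
    have : ∑ a, (p ⬝ᵥ (t a).mulVec q) • f c a e • b e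
        = (∑ a, f c a e * (p ⬝ᵥ (t a).mulVec q)) • b e := by
      rw [Finset.sum_smul]
      exact Finset.sum_congr rfl fun a _ => by rw [smul_smul, mul_comm]
    rw [this, hscalar e, add_smul]
  have hequiv : ∀ x p q, ⁅x, μ p q⁆ = μ ((T x).mulVec p) q + μ p ((T x).mulVec q) := by
    intro x p q
    conv_lhs => rw [← b.sum_repr x]
    rw [← hT x, sum_smul_mulVec, sum_smul_mulVec, hμsum1, hμsum2, hsum_lie,
      ← Finset.sum_add_distrib]
    exact Finset.sum_congr rfl fun c _ => by rw [smul_lie, hequiv_b, smul_add]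
  have hTμ : ∀ p q, T (μ p q) = ∑ a, (p ⬝ᵥ (t a).mulVec q) • t a := by
    intro p q
    simp only [hμdef, map_sum, _root_.map_smul, hTb]
  have hTbrac : ∀ y z, T ⁅y, z⁆ = T y * T z - T z * T y := by
    intro y z
    have hbb : ∀ a c, T ⁅b a, b c⁆ = t a * t c - t c * t a := by
      intro a c
      rw [hstruct a c, map_sum]
      simp only [_root_.map_smul, hTb]
      exact (hrep a c).symm
    conv_lhs => rw [← b.sum_repr y, ← b.sum_repr z]
    rw [hsum_lie, map_sum, ← hT y, ← hT z]
    simp only [smul_lie, hlie_sum, lie_smul, _root_.map_smul, map_sum, Finset.smul_sum, hbb,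
      smul_sub, Finset.sum_sub_distrib, Finset.sum_mul, Finset.mul_sum, smul_mul_assoc,
      mul_smul_comm]
    congr 1
    rw [Finset.sum_comm]
    exact Finset.sum_congr rfl fun a _ => Finset.sum_congr rfl fun c _ => smul_comm _ _ _
  have hμfold : ∀ p q : Fin n → ℝ, (∑ a, (p ⬝ᵥ (t a).mulVec q) • b a) = μ p q :=
    fun _ _ => rfl
  have hbr : br = fun P Q =>
      (⁅P.1, Q.1⁆ + ∑ a, (P.2 ⬝ᵥ (t a).mulVec Q.2) • b a,
        (∑ a, b.repr P.1 a • t a).mulVec Q.2 - (∑ a, b.repr Q.1 a • t a).mulVec P.2) := rfl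
  refine ⟨?_, ?_, ?_, ?_⟩
  · -- antisymmetry
    intro P Q
    simp only [hbr]
    rw [Prod.neg_mk, Prod.mk.injEq]
    constructor
    · rw [hμfold, hμfold, hμskew P.2 Q.2, ← lie_skew]
      abel
    · exact (neg_sub _ _).symm
  · -- Jacobi identity
    rintro ⟨x, u⟩ ⟨y, v⟩ ⟨z, w⟩
    simp only [hbr, hμfold, hT]
    rw [Prod.mk_add_mk, Prod.mk_add_mk, Prod.mk_eq_zero]
    constructor
    · -- first components: reduces to the Jacobi identity in g
      simp only [lie_add, hμsub2, hequiv]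
      rw [hμskew ((T x).mulVec v) w, hμskew ((T y).mulVec w) u, hμskew ((T z).mulVec u) v]
      rw [show (0 : g) = ⁅x, ⁅y, z⁆⁆ + ⁅y, ⁅z, x⁆⁆ + ⁅z, ⁅x, y⁆⁆ from (lie_jacobi x y z).symm]
      abel
    · -- second components: reduces to the Bianchi identity
      simp only [map_add, hTbrac, hTμ, Matrix.mulVec_sub, Matrix.add_mulVec, Matrix.sub_mulVec,
        sum_smul_mulVec, ← Matrix.mulVec_mulVec]
      have hb' : (∑ a, (v ⬝ᵥ (t a).mulVec w) • (t a).mulVec u)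
          + (∑ a, (w ⬝ᵥ (t a).mulVec u) • (t a).mulVec v)
          + (∑ a, (u ⬝ᵥ (t a).mulVec v) • (t a).mulVec w) = 0 := by
        simp only [← Finset.sum_add_distrib]
        exact bianchiVec t hbianchi u v w
      rw [← neg_eq_zero, ← hb']
      abel
  · -- g is a subalgebra
    intro y z
    simp only [hbr]
    simp
  · -- [p, p] ⊆ g
    intro u v
    simp only [hbr]
    simp
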